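/- arXiv:1105.3022 — 4 statements merged into one kernel-verified Lean document; each statement's English description precedes it below -/
import Mathlib

section
/- For every integer m ≥ 1 and every n ∈ ℕ, the identity Ψ_m(Δ²S)_n · Φ_m(ΔS)_{n+1} − Ψ_{m−1}(Δ²S)_{n+1} · Φ_{m+1}(ΔS)_n = E_m(n) · Ψ_m(ΔS)_{n+1} holds, where E_m(n) denotes the determinant of the (m+1)×(m+1) matrix whose row 0 consists entirely of ones, whose row 1 has (1,j) entry n + j (as a real number) for 0 ≤ j ≤ m, and whose (i,j) entry, for 2 ≤ i ≤ m, is (Δ^{2i−3} S)_{n+j}. (This is the paper's instance of Schwein's determinantal identity used in the proof of Theorem 1.) -/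
open Matrix Polynomial
namespace Aux

def emb (k : ℕ) : Fin 2 ⊕ Fin k ≃ Fin (k + 2) :=
  finSumFinEquiv.trans (finCongr (Nat.add_comm 2 k))

lemma emb_inl (k : ℕ) (i : Fin 2) : ((emb k) (Sum.inl i) : ℕ) = i := by
  simp [emb, finSumFinEquiv]

lemma emb_inr (k : ℕ) (i : Fin k) : ((emb k) (Sum.inr i) : ℕ) = 2 + i := by
  simp [emb, finSumFinEquiv]; omega

lemma emb_inl0 (k : ℕ) : emb k (Sum.inl 0) = 0 := by
  apply Fin.ext; simp [emb_inl]

lemma emb_inl1 (k : ℕ) : emb k (Sum.inl 1) = 1 := by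
  apply Fin.ext; simp [emb_inl]

lemma emb_inr_eq (k : ℕ) (i : Fin k) : emb k (Sum.inr i) = i.succ.succ := by
  apply Fin.ext; simp [emb_inr]; omega

lemma emb_inr_ne0 (k : ℕ) (i : Fin k) : emb k (Sum.inr i) ≠ 0 := by
  intro h; have := congrArg Fin.val h; rw [emb_inr] at this; simp at this
lemma emb_inr_ne1 (k : ℕ) (i : Fin k) : emb k (Sum.inr i) ≠ 1 := by
  intro h; have := congrArg Fin.val h; rw [emb_inr] at this
  simp [Fin.val_one] at this; omega

lemma emb_inl_eq0 {k : ℕ} (i : Fin 2) : emb k (Sum.inl i) = 0 ↔ i = 0 := by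
  rw [← emb_inl0 k, (emb k).injective.eq_iff]
  exact Sum.inl.inj_iff

lemma emb_inl_eq1 {k : ℕ} (i : Fin 2) : emb k (Sum.inl i) = 1 ↔ i = 1 := by
  rw [← emb_inl1 k, (emb k).injective.eq_iff]
  exact Sum.inl.inj_iff

lemma fin2cases (j : Fin 2) : j = 0 ∨ j = 1 := by fin_cases j <;> simp

lemma det_blocks₁₂ {R : Type*} [CommRing R] {k : ℕ} (M : Matrix (Fin (k + 2)) (Fin (k + 2)) R)
    (A : Matrix (Fin 2) (Fin 2) R) (C : Matrix (Fin k) (Fin 2) R) (D : Matrix (Fin k) (Fin k) R)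
    (hA : ∀ i j, M (emb k (Sum.inl i)) (emb k (Sum.inl j)) = A i j)
    (hB : ∀ i j, M (emb k (Sum.inl i)) (emb k (Sum.inr j)) = 0)
    (hC : ∀ i j, M (emb k (Sum.inr i)) (emb k (Sum.inl j)) = C i j)
    (hD : ∀ i j, M (emb k (Sum.inr i)) (emb k (Sum.inr j)) = D i j) :
    M.det = A.det * D.det := by
  rw [← Matrix.det_submatrix_equiv_self (emb k) M]
  have h : M.submatrix (emb k) (emb k) = Matrix.fromBlocks A 0 C D := by
    ext i j
    rcases i with i | i <;> rcases j with j | j <;>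
      simp [Matrix.fromBlocks, hA, hB, hC, hD]
  rw [h, Matrix.det_fromBlocks_zero₁₂]

lemma det_blocks₂₁ {R : Type*} [CommRing R] {k : ℕ} (M : Matrix (Fin (k + 2)) (Fin (k + 2)) R)
    (A : Matrix (Fin 2) (Fin 2) R) (B : Matrix (Fin 2) (Fin k) R) (D : Matrix (Fin k) (Fin k) R)
    (hA : ∀ i j, M (emb k (Sum.inl i)) (emb k (Sum.inl j)) = A i j)
    (hB : ∀ i j, M (emb k (Sum.inl i)) (emb k (Sum.inr j)) = B i j)
    (hC : ∀ i j, M (emb k (Sum.inr i)) (emb k (Sum.inl j)) = 0)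
    (hD : ∀ i j, M (emb k (Sum.inr i)) (emb k (Sum.inr j)) = D i j) :
    M.det = A.det * D.det := by
  rw [← Matrix.det_submatrix_equiv_self (emb k) M]
  have h : M.submatrix (emb k) (emb k) = Matrix.fromBlocks A B 0 D := by
    ext i j
    rcases i with i | i <;> rcases j with j | j <;>
      simp [Matrix.fromBlocks, hA, hB, hC, hD]
  rw [h, Matrix.det_fromBlocks_zero₂₁]

lemma dj_mul {R : Type*} [CommRing R] {k : ℕ} (M : Matrix (Fin (k + 2)) (Fin (k + 2)) R) :
    M.det * (M.det *
      (M.submatrix (fun i : Fin k => i.succ.succ) (fun j : Fin k => j.succ.succ)).det)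
    = M.det * (adjugate M 0 0 * adjugate M 1 1 - adjugate M 0 1 * adjugate M 1 0) := by
  classical
  set Z : Matrix (Fin (k + 2)) (Fin (k + 2)) R := Matrix.of fun i j =>
    if j = 0 then adjugate M i 0 else if j = 1 then adjugate M i 1
    else if i = j then 1 else 0 with hZdef
  have hZ0 : ∀ a, Z a 0 = adjugate M a 0 := by intro a; simp [hZdef]
  have hZ1 : ∀ a, Z a 1 = adjugate M a 1 := by intro a; simp [hZdef]
  have hZr : ∀ a (j : Fin k), Z a (emb k (Sum.inr j)) =
      if a = emb k (Sum.inr j) then 1 else 0 := by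
    intro a j; simp [hZdef, emb_inr_ne0, emb_inr_ne1]
  have h0 : ∀ i, (M * Z) i 0 = (M.det • (1 : Matrix (Fin (k+2)) (Fin (k+2)) R)) i 0 := by
    intro i
    have h : (M * Z) i 0 = (M * adjugate M) i 0 := by
      rw [Matrix.mul_apply, Matrix.mul_apply]
      exact Finset.sum_congr rfl fun a _ => by rw [hZ0]
    rw [h, Matrix.mul_adjugate]
  have h1 : ∀ i, (M * Z) i 1 = (M.det • (1 : Matrix (Fin (k+2)) (Fin (k+2)) R)) i 1 := by
    intro i
    have h : (M * Z) i 1 = (M * adjugate M) i 1 := by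
      rw [Matrix.mul_apply, Matrix.mul_apply]
      exact Finset.sum_congr rfl fun a _ => by rw [hZ1]
    rw [h, Matrix.mul_adjugate]
  have hr : ∀ i (j : Fin k), (M * Z) i (emb k (Sum.inr j)) = M i (emb k (Sum.inr j)) := by
    intro i j
    rw [Matrix.mul_apply]
    rw [Finset.sum_eq_single (emb k (Sum.inr j))]
    · rw [hZr]; simp
    · intro a _ ha; rw [hZr]; simp only [ha, if_false, mul_zero]
    · simp
  have hdetMZ : (M * Z).det = (M.det * M.det) *
      (M.submatrix (fun i : Fin k => i.succ.succ) (fun j : Fin k => j.succ.succ)).det := by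
    have hblocks := det_blocks₂₁ (M * Z) (M.det • (1 : Matrix (Fin 2) (Fin 2) R))
      (Matrix.of fun i j => M (emb k (Sum.inl i)) (emb k (Sum.inr j)))
      (M.submatrix (fun i : Fin k => i.succ.succ) (fun j : Fin k => j.succ.succ))
      (fun i j => by
        rcases fin2cases j with rfl | rfl
        · rw [emb_inl0, h0]
          simp [Matrix.smul_apply, Matrix.one_apply, emb_inl_eq0]
        · rw [emb_inl1, h1]
          simp [Matrix.smul_apply, Matrix.one_apply, emb_inl_eq1])
      (fun i j => hr _ _)
      (fun i j => by
        rcases fin2cases j with rfl | rfl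
        · rw [emb_inl0, h0]
          simp [Matrix.smul_apply, Matrix.one_apply, emb_inr_ne0]
        · rw [emb_inl1, h1]
          simp [Matrix.smul_apply, Matrix.one_apply, emb_inr_ne1])
      (fun i j => by rw [hr, emb_inr_eq, emb_inr_eq]; rfl)
    rw [hblocks, Matrix.det_smul, Matrix.det_one]
    simp [Fintype.card_fin]
    ring
  have hdetZ : Z.det = adjugate M 0 0 * adjugate M 1 1 - adjugate M 0 1 * adjugate M 1 0 := by
    have hblocks := det_blocks₁₂ Z
      (!![adjugate M 0 0, adjugate M 0 1; adjugate M 1 0, adjugate M 1 1])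
      (Matrix.of fun i j => Z (emb k (Sum.inr i)) (emb k (Sum.inl j)))
      (1 : Matrix (Fin k) (Fin k) R)
      (fun i j => by
        rcases fin2cases i with rfl | rfl <;> rcases fin2cases j with rfl | rfl <;>
          simp [emb_inl0, emb_inl1, hZ0, hZ1])
      (fun i j => by
        rw [hZr]
        have h2 : emb k (Sum.inl i) ≠ emb k (Sum.inr j) := fun h => by
          simpa using (emb k).injective h
        simp [h2])
      (fun i j => rfl)
      (fun i j => by
        rw [hZr]
        simp [Matrix.one_apply, (emb k).injective.eq_iff])
    rw [hblocks, Matrix.det_fin_two_of, Matrix.det_one, mul_one]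
  calc M.det * (M.det *
      (M.submatrix (fun i : Fin k => i.succ.succ) (fun j : Fin k => j.succ.succ)).det)
      = (M * Z).det := by rw [hdetMZ]; ring
    _ = M.det * Z.det := by rw [Matrix.det_mul]
    _ = _ := by rw [hdetZ]

lemma dj {k : ℕ} (M : Matrix (Fin (k + 2)) (Fin (k + 2)) ℝ) :
    M.det * (M.submatrix (fun i : Fin k => i.succ.succ) (fun j : Fin k => j.succ.succ)).det
    = (M.submatrix (Fin.succAbove 0) (Fin.succAbove 0)).det *
        (M.submatrix (Fin.succAbove 1) (Fin.succAbove 1)).det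
      - (M.submatrix (Fin.succAbove 0) (Fin.succAbove 1)).det *
        (M.submatrix (Fin.succAbove 1) (Fin.succAbove 0)).det := by
  set Mp : Matrix (Fin (k + 2)) (Fin (k + 2)) (Polynomial ℝ) := charmatrix (-M) with hMp
  have hne : Mp.det ≠ 0 := (Matrix.charpoly_monic (-M)).ne_zero
  have h := dj_mul Mp
  rw [adjugate_fin_succ_eq_det_submatrix, adjugate_fin_succ_eq_det_submatrix,
    adjugate_fin_succ_eq_det_submatrix, adjugate_fin_succ_eq_det_submatrix] at h
  norm_num at h
  have h2 := h.resolve_right hne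
  have hmap : Mp.map (Polynomial.evalRingHom (0 : ℝ)) = M := by
    ext i j
    by_cases hij : i = j
    · subst hij; simp [hMp, charmatrix_apply_eq]
    · simp [hMp, charmatrix_apply_ne _ _ _ hij]
  have h3 := congrArg (Polynomial.evalRingHom (0 : ℝ)) h2
  simp only [_root_.map_mul, _root_.map_sub, RingHom.map_det, RingHom.mapMatrix_apply,
    ← Matrix.submatrix_map, hmap] at h3
  simpa [Fin.succAbove_zero, mul_comm] using h3

lemma det_col_single {R : Type*} [CommRing R] {k : ℕ} (A : Matrix (Fin (k + 1)) (Fin (k + 1)) R)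
    (i₀ : Fin (k + 1)) (h : ∀ i, A i 0 = if i = i₀ then 1 else 0) :
    A.det = (-1) ^ (i₀ : ℕ) * (A.submatrix i₀.succAbove Fin.succ).det := by
  rw [Matrix.det_succ_column_zero, Finset.sum_eq_single i₀]
  · rw [h]; simp
  · intro b _ hb; rw [h]; simp [hb]
  · simp

lemma det_diff {R : Type*} [CommRing R] {k : ℕ} (P : Matrix (Fin (k + 1)) (Fin (k + 1)) R)
    (h : ∀ j, P 0 j = 1) :
    P.det = (Matrix.of fun i j : Fin k => P i.succ j.succ - P i.succ j.castSucc).det := by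
  classical
  set T : Matrix (Fin (k + 1)) (Fin (k + 1)) R := Matrix.of fun a b =>
    if a = b then 1 else if (a : ℕ) + 1 = (b : ℕ) then -1 else 0 with hTdef
  have hT : T.det = 1 := by
    rw [Matrix.det_of_upperTriangular]
    · simp [hTdef]
    · intro i j hji
      have hj : (j : ℕ) < (i : ℕ) := hji
      have h1 : ¬ i = j := by
        intro h'; subst h'; exact absurd hj (lt_irrefl _)
      have h2 : ¬ ((i : ℕ) + 1 = (j : ℕ)) := by omega
      simp [hTdef, h1, h2]
  have hPT0 : ∀ i, (P * T) i 0 = P i 0 := by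
    intro i
    rw [Matrix.mul_apply, Finset.sum_eq_single 0]
    · simp [hTdef]
    · intro b _ hb
      have h2 : ¬ ((b : ℕ) + 1 = (0 : ℕ)) := by omega
      simp [hTdef, hb, h2]
    · simp
  have hPTs : ∀ (i : Fin (k + 1)) (j : Fin k),
      (P * T) i j.succ = P i j.succ - P i j.castSucc := by
    intro i j
    rw [Matrix.mul_apply]
    have hsplit : ∀ a : Fin (k + 1), T a j.succ =
        (if a = j.succ then 1 else 0) + (if a = j.castSucc then -1 else 0) := by
      intro a
      by_cases h1 : a = j.succ
      · subst h1
        have : ¬ (j.succ = j.castSucc) := by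
          intro h'; have := congrArg Fin.val h'; simp at this
        simp [hTdef, this]
      · by_cases h2 : a = j.castSucc
        · subst h2
          have hv : (j.castSucc : ℕ) + 1 = (j.succ : ℕ) := by simp
          have : ¬ (j.castSucc = j.succ) := by
            intro h'; have := congrArg Fin.val h'; simp at this
          simp [hTdef, this, hv]
        · have hv : ¬ ((a : ℕ) = (j : ℕ)) := by
            intro h'
            apply h2
            apply Fin.ext
            simpa using h'
          simp [hTdef, h1, h2, hv]
    calc (∑ a, P i a * T a j.succ)
        = ∑ a, (P i a * (if a = j.succ then 1 else 0)
            + P i a * (if a = j.castSucc then -1 else 0)) := by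
          apply Finset.sum_congr rfl
          intro a _
          rw [hsplit, mul_add]
      _ = P i j.succ - P i j.castSucc := by
          rw [Finset.sum_add_distrib]
          simp [Finset.sum_ite_eq', mul_ite, sub_eq_add_neg]
  have hdet : P.det = (P * T).det := by rw [Matrix.det_mul, hT, mul_one]
  rw [hdet, Matrix.det_succ_row_zero, Finset.sum_eq_single 0]
  · have h00 : (P * T) 0 0 = 1 := by rw [hPT0]; exact h 0
    rw [h00]
    simp only [Fin.val_zero, pow_zero, one_mul, Fin.succAbove_zero]
    congr 1
    ext i j
    simp only [Matrix.submatrix_apply, Matrix.of_apply]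
    rw [hPTs]
  · intro b _ hb
    obtain ⟨j, rfl⟩ := Fin.exists_succ_eq.mpr hb
    rw [hPTs, h, h]
    simp
  · simp

end Aux

/-- Forward difference operator: `(Δ v) n = v (n+1) - v n`. -/
def Δ (v : ℕ → ℝ) : ℕ → ℝ := fun n => v (n + 1) - v n

/-- `Psi k v n` is the determinant of the `k × k` matrix whose `(i, j)` entry is
`(Δ^[2*i] v) (n + j)`.  For `k = 0` this is the empty determinant `1`. -/
noncomputable def Psi (k : ℕ) (v : ℕ → ℝ) (n : ℕ) : ℝ :=
  (Matrix.of fun i j : Fin k => (Δ^[2 * i.val] v) (n + j.val)).det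

/-- `Phi k v n` is the determinant of the `k × k` matrix whose row `0` is
`n, n+1, …, n+k-1` and whose `(i, j)` entry for `1 ≤ i` is `(Δ^[2*(i-1)] v) (n + j)`. -/
noncomputable def Phi (k : ℕ) (v : ℕ → ℝ) (n : ℕ) : ℝ :=
  (Matrix.of fun i j : Fin k =>
    if i.val = 0 then ((n + j.val : ℕ) : ℝ) else (Δ^[2 * (i.val - 1)] v) (n + j.val)).det

namespace Aux

lemma iterEq (S : ℕ → ℝ) {a b x y : ℕ} (h1 : a = b) (h2 : x = y) :
    Δ^[a] S x = Δ^[b] S y := by subst h1; subst h2; rfl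

lemma dstep (S : ℕ → ℝ) (a x : ℕ) : Δ^[a] S (x + 1) - Δ^[a] S x = Δ^[a + 1] S x := by
  rw [Function.iterate_succ_apply' Δ a S]
  rfl

lemma succAbove_one_val {r : ℕ} (i : Fin (r + 1)) :
    (((1 : Fin (r + 2)).succAbove i) : ℕ) = if (i : ℕ) = 0 then 0 else (i : ℕ) + 1 := by
  rcases Nat.eq_zero_or_pos (i : ℕ) with h | h
  · rw [if_pos h]
    rw [Fin.succAbove, if_pos]
    · simpa using h
    · rw [Fin.lt_def]
      simp only [Fin.coe_castSucc]
      rw [Fin.val_one]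
      omega
  · rw [if_neg (by omega)]
    rw [Fin.succAbove, if_neg]
    · simp
    · rw [Fin.lt_def]
      simp only [Fin.coe_castSucc]
      rw [Fin.val_one]
      omega

end Aux

theorem stmt12 (S : ℕ → ℝ) (m : ℕ) (hm : 1 ≤ m) (n : ℕ) :
    Psi m (Δ^[2] S) n * Phi m (Δ S) (n + 1)
      - Psi (m - 1) (Δ^[2] S) (n + 1) * Phi (m + 1) (Δ S) n
      = (Matrix.of fun i j : Fin (m + 1) =>
          if i.val = 0 then (1 : ℝ)
          else if i.val = 1 then ((n + j.val : ℕ) : ℝ)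
          else (Δ^[2 * i.val - 3] S) (n + j.val)).det
        * Psi m (Δ S) (n + 1) := by
  classical
  obtain ⟨q, rfl⟩ : ∃ q, m = q + 1 := ⟨m - 1, by omega⟩
  simp only [Nat.add_sub_cancel]
  set M : Matrix (Fin (q + 1 + 2)) (Fin (q + 1 + 2)) ℝ := Matrix.of fun i j =>
    if (j : ℕ) = 0 then (if (i : ℕ) = q + 2 then (1 : ℝ) else 0)
    else if (i : ℕ) = 0 then 1
    else if (i : ℕ) = 1 then ((n + ((j : ℕ) - 1) : ℕ) : ℝ)
    else (Δ^[2 * (i : ℕ) - 3] S) (n + ((j : ℕ) - 1)) with hMdef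
  have hdj := Aux.dj (k := q + 1) M
  have hsa1 : ∀ i : Fin (q + 2), (((1 : Fin (q + 1 + 2)).succAbove i) : ℕ)
      = if (i : ℕ) = 0 then 0 else (i : ℕ) + 1 := fun i => Aux.succAbove_one_val i
  -- L1 : det M
  have hL1 : M.det = (-1 : ℝ) ^ (q + 2) *
      (Matrix.of fun i j : Fin (q + 1 + 1) =>
        if i.val = 0 then (1 : ℝ)
        else if i.val = 1 then ((n + j.val : ℕ) : ℝ)
        else (Δ^[2 * i.val - 3] S) (n + j.val)).det := by
    have hcol : ∀ i, M i 0 = if i = Fin.last (q + 2) then (1 : ℝ) else 0 := by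
      intro i
      have hi := i.isLt
      simp only [hMdef, Matrix.of_apply, Fin.val_zero, Fin.ext_iff, Fin.val_last]
      split_ifs <;> first | rfl | (exact (‹False›).elim) | (exfalso; omega)
    have h := Aux.det_col_single (k := q + 2) M (Fin.last (q + 2)) hcol
    have hmat : M.submatrix (Fin.last (q + 2)).succAbove Fin.succ
        = Matrix.of fun i j : Fin (q + 1 + 1) =>
          if i.val = 0 then (1 : ℝ)
          else if i.val = 1 then ((n + j.val : ℕ) : ℝ)
          else (Δ^[2 * i.val - 3] S) (n + j.val) := by
      ext i j
      have hi := i.isLt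
      simp only [Matrix.submatrix_apply, Matrix.of_apply, hMdef, Fin.succAbove_last,
        Fin.coe_castSucc, Fin.val_succ]
      split_ifs <;> first | rfl | (exact (‹False›).elim) | (exfalso; omega) | (exact congrArg Nat.cast (by omega)) | (exact Aux.iterEq S (by omega) (by omega))
    rw [h, hmat, Fin.val_last]
  -- L2 : central minor
  have hL2 : (M.submatrix (fun i : Fin (q + 1) => i.succ.succ)
      (fun j : Fin (q + 1) => j.succ.succ)).det = Psi (q + 1) (Δ S) (n + 1) := by
    unfold Psi
    have hmat : M.submatrix (fun i : Fin (q + 1) => i.succ.succ)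
        (fun j : Fin (q + 1) => j.succ.succ)
        = Matrix.of fun i j : Fin (q + 1) => (Δ^[2 * i.val] (Δ S)) ((n + 1) + j.val) := by
      ext i j
      have hi := i.isLt
      simp only [Matrix.submatrix_apply, Matrix.of_apply, hMdef, Fin.val_succ]
      rw [← Function.iterate_succ_apply Δ (2 * (i : ℕ)) S]
      split_ifs <;> first | rfl | (exact (‹False›).elim) | (exfalso; omega) | (exact Aux.iterEq S (by omega) (by omega))
    rw [hmat]
  -- L3 : minor00
  have hL3 : (M.submatrix (Fin.succAbove 0) (Fin.succAbove 0)).det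
      = Phi (q + 1 + 1) (Δ S) n := by
    unfold Phi
    have hmat : M.submatrix (Fin.succAbove 0) (Fin.succAbove 0)
        = Matrix.of fun i j : Fin (q + 1 + 1) =>
          if i.val = 0 then ((n + j.val : ℕ) : ℝ)
          else (Δ^[2 * (i.val - 1)] (Δ S)) (n + j.val) := by
      ext i j
      have hi := i.isLt
      simp only [Matrix.submatrix_apply, Matrix.of_apply, hMdef, Fin.succAbove_zero,
        Fin.val_succ]
      rw [← Function.iterate_succ_apply Δ (2 * ((i : ℕ) - 1)) S]
      split_ifs <;> first | rfl | (exact (‹False›).elim) | (exfalso; omega) | (exact congrArg Nat.cast (by omega)) | (exact Aux.iterEq S (by omega) (by omega))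
    rw [hmat]
  -- L4 : minor10
  have hL4 : (M.submatrix (Fin.succAbove 1) (Fin.succAbove 0)).det
      = Psi (q + 1) (Δ^[2] S) n := by
    have hmat : M.submatrix (Fin.succAbove 1) (Fin.succAbove 0)
        = Matrix.of (fun i j : Fin (q + 2) =>
            if (i : ℕ) = 0 then (1 : ℝ) else Δ^[2 * (i : ℕ) - 1] S (n + (j : ℕ))) := by
      ext i j
      have hi := i.isLt
      simp only [Matrix.submatrix_apply, Matrix.of_apply, hMdef, Fin.succAbove_zero,
        Fin.val_succ, hsa1]
      split_ifs <;> first | rfl | (exact (‹False›).elim) | (exfalso; omega) | (exact congrArg Nat.cast (by omega)) | (exact Aux.iterEq S (by omega) (by omega))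
    rw [hmat, Aux.det_diff _ (fun j => by simp)]
    unfold Psi
    congr 1
    ext i j
    simp only [Matrix.of_apply, Fin.val_succ, Fin.coe_castSucc]
    rw [← Function.iterate_add_apply Δ (2 * (i : ℕ)) 2 S]
    rw [if_neg (show ¬((i : ℕ) + 1 = 0) from by omega),
      show 2 * ((i : ℕ) + 1) - 1 = 2 * (i : ℕ) + 1 from by omega,
      show n + ((j : ℕ) + 1) = (n + (j : ℕ)) + 1 from by omega]
    exact (Aux.dstep S _ _).trans (Aux.iterEq S (by omega) rfl)
  -- L5 : minor11
  have hL5 : (M.submatrix (Fin.succAbove 1) (Fin.succAbove 1)).det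
      = (-1 : ℝ) ^ (q + 1) * Psi q (Δ^[2] S) (n + 1) := by
    set N := M.submatrix (Fin.succAbove (1 : Fin (q + 1 + 2)))
      (Fin.succAbove (1 : Fin (q + 1 + 2))) with hNdef
    have hcol : ∀ i : Fin (q + 2), N i 0 = if i = Fin.last (q + 1) then (1 : ℝ) else 0 := by
      intro i
      have hi := i.isLt
      simp only [hNdef, Matrix.submatrix_apply, hMdef, Matrix.of_apply, hsa1,
        Fin.val_zero, Fin.ext_iff, Fin.val_last]
      split_ifs <;> first | rfl | (exact (‹False›).elim) | (exfalso; omega)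
    have h := Aux.det_col_single (k := q + 1) N (Fin.last (q + 1)) hcol
    have hmat : N.submatrix (Fin.last (q + 1)).succAbove Fin.succ
        = Matrix.of (fun i j : Fin (q + 1) =>
            if (i : ℕ) = 0 then (1 : ℝ) else Δ^[2 * (i : ℕ) - 1] S ((n + 1) + (j : ℕ))) := by
      ext i j
      have hi := i.isLt
      simp only [hNdef, Matrix.submatrix_apply, hMdef, Matrix.of_apply, hsa1,
        Fin.succAbove_last, Fin.coe_castSucc, Fin.val_succ]
      split_ifs <;> first | rfl | (exact (‹False›).elim) | (exfalso; omega) | (exact congrArg Nat.cast (by omega)) | (exact Aux.iterEq S (by omega) (by omega))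
    rw [h, hmat, Fin.val_last, Aux.det_diff _ (fun j => by simp)]
    unfold Psi
    congr 2
    ext i j
    simp only [Matrix.of_apply, Fin.val_succ, Fin.coe_castSucc]
    rw [← Function.iterate_add_apply Δ (2 * (i : ℕ)) 2 S]
    rw [if_neg (show ¬((i : ℕ) + 1 = 0) from by omega),
      show 2 * ((i : ℕ) + 1) - 1 = 2 * (i : ℕ) + 1 from by omega,
      show (n + 1) + ((j : ℕ) + 1) = ((n + 1) + (j : ℕ)) + 1 from by omega]
    exact (Aux.dstep S _ _).trans (Aux.iterEq S (by omega) rfl)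
  -- L6 : minor01
  have hL6 : (M.submatrix (Fin.succAbove 0) (Fin.succAbove 1)).det
      = (-1 : ℝ) ^ (q + 1) * Phi (q + 1) (Δ S) (n + 1) := by
    set N := M.submatrix (Fin.succAbove (0 : Fin (q + 1 + 2)))
      (Fin.succAbove (1 : Fin (q + 1 + 2))) with hNdef
    have hcol : ∀ i : Fin (q + 2), N i 0 = if i = Fin.last (q + 1) then (1 : ℝ) else 0 := by
      intro i
      have hi := i.isLt
      simp only [hNdef, Matrix.submatrix_apply, hMdef, Matrix.of_apply, hsa1,
        Fin.succAbove_zero, Fin.val_succ, Fin.val_zero, Fin.ext_iff, Fin.val_last]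
      split_ifs <;> first | rfl | (exact (‹False›).elim) | (exfalso; omega)
    have h := Aux.det_col_single (k := q + 1) N (Fin.last (q + 1)) hcol
    have hmat : N.submatrix (Fin.last (q + 1)).succAbove Fin.succ
        = Matrix.of (fun i j : Fin (q + 1) =>
            if (i : ℕ) = 0 then (((n + 1) + (j : ℕ) : ℕ) : ℝ)
            else Δ^[2 * ((i : ℕ) - 1)] (Δ S) ((n + 1) + (j : ℕ))) := by
      ext i j
      have hi := i.isLt
      simp only [hNdef, Matrix.submatrix_apply, hMdef, Matrix.of_apply, hsa1,
        Fin.succAbove_last, Fin.succAbove_zero, Fin.coe_castSucc, Fin.val_succ]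
      rw [← Function.iterate_succ_apply Δ (2 * ((i : ℕ) - 1)) S]
      split_ifs <;> first | rfl | (exact (‹False›).elim) | (exfalso; omega) | (exact congrArg Nat.cast (by omega)) | (exact Aux.iterEq S (by omega) (by omega))
    rw [h, hmat, Fin.val_last]
    unfold Phi
    rfl
  rw [hL1, hL2, hL3, hL4, hL5, hL6] at hdj
  set Edet := (Matrix.of fun i j : Fin (q + 1 + 1) =>
    if i.val = 0 then (1 : ℝ)
    else if i.val = 1 then ((n + j.val : ℕ) : ℝ)
    else (Δ^[2 * i.val - 3] S) (n + j.val)).det with hEdef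
  set ε := (-1 : ℝ) ^ (q + 1) with hεdef
  have hpow : (-1 : ℝ) ^ (q + 2) = -ε := by rw [hεdef, pow_succ]; ring
  have hε2 : ε * ε = 1 := by
    rw [hεdef, ← pow_add]
    exact Even.neg_one_pow ⟨q + 1, by ring⟩
  rw [hpow] at hdj
  linear_combination ε * hdj - (Psi (q + 1) (Δ^[2] S) n * Phi (q + 1) (Δ S) (n + 1)
    - Psi q (Δ^[2] S) (n + 1) * Phi (q + 1 + 1) (Δ S) n
    - Edet * Psi (q + 1) (Δ S) (n + 1)) * hε2
end

section
/- Suppose F and G satisfy (B1) for all k ≥ 1 and all n ∈ ℕ, and (B2) for all k ≥ 2 and all n ∈ ℕ, and suppose F_k^n ≠ 0 for all k ≥ 1 and n ∈ ℕ. Define U_k^n = G_k^n / F_k^n. Then for all k ≥ 1 and n ∈ ℕ the factors U_{k+2}^{n+1} − U_{k+2}^n and U_{k+1}^{n+1} − U_{k+1}^n are nonzero, and U satisfies the lattice equation U_{k+3}^n = U_k^{n+1} − 1 / ((U_{k+2}^{n+1} − U_{k+2}^n) · (U_{k+1}^{n+1} − U_{k+1}^n)). -/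
theorem stmt14 (F G : ℕ → ℕ → ℝ)
    (hB1 : ∀ k, 1 ≤ k → ∀ n : ℕ,
      F k n * G k (n + 1) - F k (n + 1) * G k n = F (k + 1) n * F (k - 1) (n + 1))
    (hB2 : ∀ k, 2 ≤ k → ∀ n : ℕ,
      F (k + 2) n * G (k - 1) (n + 1) - F (k - 1) (n + 1) * G (k + 2) n
        = F (k + 1) (n + 1) * F k n)
    (hF : ∀ k, 1 ≤ k → ∀ n : ℕ, F k n ≠ 0)
    (U : ℕ → ℕ → ℝ) (hU : ∀ k n : ℕ, U k n = G k n / F k n) :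
    ∀ k, 1 ≤ k → ∀ n : ℕ,
      U (k + 2) (n + 1) - U (k + 2) n ≠ 0 ∧
      U (k + 1) (n + 1) - U (k + 1) n ≠ 0 ∧
      U (k + 3) n = U k (n + 1)
        - 1 / ((U (k + 2) (n + 1) - U (k + 2) n) * (U (k + 1) (n + 1) - U (k + 1) n)) := by
  intro k hk n
  have hf0 : F k (n + 1) ≠ 0 := hF k hk (n + 1)
  have hf1n : F (k + 1) n ≠ 0 := hF (k + 1) (by omega) n
  have hf1 : F (k + 1) (n + 1) ≠ 0 := hF (k + 1) (by omega) (n + 1)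
  have hf2n : F (k + 2) n ≠ 0 := hF (k + 2) (by omega) n
  have hf2 : F (k + 2) (n + 1) ≠ 0 := hF (k + 2) (by omega) (n + 1)
  have hf3n : F (k + 3) n ≠ 0 := hF (k + 3) (by omega) n
  have h1 : F (k + 2) n * G (k + 2) (n + 1) - F (k + 2) (n + 1) * G (k + 2) n
      = F (k + 3) n * F (k + 1) (n + 1) := hB1 (k + 2) (by omega) n
  have h2 : F (k + 1) n * G (k + 1) (n + 1) - F (k + 1) (n + 1) * G (k + 1) n
      = F (k + 2) n * F k (n + 1) := hB1 (k + 1) (by omega) n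
  have h3 : F (k + 3) n * G k (n + 1) - F k (n + 1) * G (k + 3) n
      = F (k + 2) (n + 1) * F (k + 1) n := hB2 (k + 1) (by omega) n
  have D2 : U (k + 2) (n + 1) - U (k + 2) n
      = F (k + 3) n * F (k + 1) (n + 1) / (F (k + 2) n * F (k + 2) (n + 1)) := by
    rw [hU, hU, div_sub_div _ _ hf2 hf2n,
      div_eq_div_iff (mul_ne_zero hf2 hf2n) (mul_ne_zero hf2n hf2)]
    linear_combination (F (k + 2) n * F (k + 2) (n + 1)) * h1
  have D1 : U (k + 1) (n + 1) - U (k + 1) n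
      = F (k + 2) n * F k (n + 1) / (F (k + 1) n * F (k + 1) (n + 1)) := by
    rw [hU, hU, div_sub_div _ _ hf1 hf1n,
      div_eq_div_iff (mul_ne_zero hf1 hf1n) (mul_ne_zero hf1n hf1)]
    linear_combination (F (k + 1) n * F (k + 1) (n + 1)) * h2
  refine ⟨?_, ?_, ?_⟩
  · rw [D2]
    exact div_ne_zero (mul_ne_zero hf3n hf1) (mul_ne_zero hf2n hf2)
  · rw [D1]
    exact div_ne_zero (mul_ne_zero hf2n hf0) (mul_ne_zero hf1n hf1)
  · have key : (U (k + 2) (n + 1) - U (k + 2) n) * (U (k + 1) (n + 1) - U (k + 1) n)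
        = F (k + 3) n * F k (n + 1) / (F (k + 2) (n + 1) * F (k + 1) n) := by
      rw [D1, D2, div_mul_div_comm,
        div_eq_div_iff (by positivity) (mul_ne_zero hf2 hf1n)]
      ring
    rw [key, one_div_div, hU (k + 3), hU k,
      div_eq_iff hf3n, sub_mul, div_mul_eq_mul_div, div_mul_eq_mul_div,
      div_sub_div _ _ hf0 (mul_ne_zero hf3n hf0), eq_div_iff (by positivity)]
    linear_combination (-(F k (n + 1) * F (k + 3) n)) * h3
end

section
/- (Theorem 2, sufficiency.) Let k ≥ 1, let S : ℕ → ℝ, let S ∈ ℝ, and suppose there exist constants a_1, …, a_k ∈ ℝ such that S_n = S + a_1 (Δ²S)_n + a_2 (Δ⁴S)_n + ⋯ + a_k (Δ^{2k}S)_n for all n ∈ ℕ. Then for every n ∈ ℕ, N_k^{(n)} = S · D_k^{(n)}; in particular, T_k^{(n)} = S for every n at which D_k^{(n)} ≠ 0. -/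
/-- Numerator determinant of the sequence transformation `T_k^{(n)}`. -/
noncomputable def Nk (k : ℕ) (S : ℕ → ℝ) (n : ℕ) : ℝ :=
  (Matrix.of fun i j : Fin (k + 1) => (Δ^[2 * i.val] S) (n + j.val)).det

/-- Denominator determinant of the sequence transformation `T_k^{(n)}`. -/
noncomputable def Dk (k : ℕ) (S : ℕ → ℝ) (n : ℕ) : ℝ :=
  (Matrix.of fun i j : Fin (k + 1) =>
    if i.val = 0 then (1 : ℝ) else (Δ^[2 * i.val] S) (n + j.val)).det

private lemma det_updateRow_finsum {m : ℕ} (M : Matrix (Fin m) (Fin m) ℝ) (j : Fin m)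
    {ι : Type*} [DecidableEq ι] (s : Finset ι) (v : ι → Fin m → ℝ) :
    (M.updateRow j (∑ i ∈ s, v i)).det = ∑ i ∈ s, (M.updateRow j (v i)).det := by
  induction s using Finset.induction_on with
  | empty =>
      simp only [Finset.sum_empty]
      apply Matrix.det_eq_zero_of_row_eq_zero j
      intro l; simp
  | @insert x s h ih =>
      rw [Finset.sum_insert h, Finset.sum_insert h, Matrix.det_updateRow_add, ih]

theorem stmt16 (k : ℕ) (hk : 1 ≤ k) (S : ℕ → ℝ) (L : ℝ) (a : Fin k → ℝ)
    (hS : ∀ n : ℕ, S n = L + ∑ i : Fin k, a i * (Δ^[2 * (i.val + 1)] S) n) :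
    ∀ n : ℕ, Nk k S n = L * Dk k S n ∧ (Dk k S n ≠ 0 → Nk k S n / Dk k S n = L) := by
  intro n
  have main : Nk k S n = L * Dk k S n := by
    set D : Matrix (Fin (k + 1)) (Fin (k + 1)) ℝ :=
      Matrix.of fun i j : Fin (k + 1) =>
        if i.val = 0 then (1 : ℝ) else (Δ^[2 * i.val] S) (n + j.val) with hD
    have hrow : (Matrix.of fun i j : Fin (k + 1) => (Δ^[2 * i.val] S) (n + j.val)) =
        D.updateRow 0 ((L • D 0) + ∑ i : Fin k, a i • D i.succ) := by
      ext i j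
      by_cases hi : i = 0
      · subst hi
        simp only [Matrix.updateRow_self, Matrix.of_apply, Pi.add_apply, Pi.smul_apply,
          Finset.sum_apply, smul_eq_mul, hD]
        simp only [Fin.val_zero, if_true, mul_zero, Function.iterate_zero, id_eq]
        rw [hS (n + j.val), mul_one]
        simp [Fin.val_succ]
      · rw [Matrix.updateRow_ne hi]
        have hne : i.val ≠ 0 := fun h => hi (Fin.ext h)
        simp [hD, hne, hi]
  -- compute determinant
    rw [Nk, hrow, Matrix.det_updateRow_add, Matrix.det_updateRow_smul,
      Matrix.updateRow_eq_self, det_updateRow_finsum]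
    have hz : ∀ i : Fin k, (D.updateRow 0 (a i • D i.succ)).det = 0 := by
      intro i
      rw [Matrix.det_updateRow_smul]
      have : (D.updateRow 0 (D i.succ)).det = 0 := by
        apply Matrix.det_zero_of_row_eq (i := (0 : Fin (k+1))) (j := i.succ)
          (Fin.succ_ne_zero i).symm
        rw [Matrix.updateRow_self, Matrix.updateRow_ne (Fin.succ_ne_zero i)]
      rw [this, mul_zero]
    rw [Finset.sum_congr rfl fun i _ => hz i]
    simp [Dk, hD, smul_eq_mul]
  exact ⟨main, fun h => by rw [main, mul_div_assoc, div_self h, mul_one]⟩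
end

section
/- Let U : ℕ × ℕ → ℝ (written U_k^n) be such that for all k ≥ 1 and all n ∈ ℕ the differences U_{k+2}^{n+1} − U_{k+2}^n and U_{k+1}^{n+1} − U_{k+1}^n are nonzero and U_{k+3}^n = U_k^{n+1} − 1 / ((U_{k+2}^{n+1} − U_{k+2}^n) · (U_{k+1}^{n+1} − U_{k+1}^n)). Then for all k ≥ 1 and all n ∈ ℕ, U satisfies the lattice Boussinesq-type relation (U_{k+1}^{n+1} − U_{k+4}^n) · (U_{k+3}^{n+1} − U_{k+3}^n) − (U_k^{n+2} − U_{k+3}^{n+1}) · (U_{k+1}^{n+2} − U_{k+1}^{n+1}) = 1/(U_{k+2}^{n+1} − U_{k+2}^n) − 1/(U_{k+2}^{n+2} − U_{k+2}^{n+1}). -/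
theorem stmt18 (U : ℕ → ℕ → ℝ)
    (hden1 : ∀ k, 1 ≤ k → ∀ n : ℕ, U (k + 2) (n + 1) - U (k + 2) n ≠ 0)
    (hden2 : ∀ k, 1 ≤ k → ∀ n : ℕ, U (k + 1) (n + 1) - U (k + 1) n ≠ 0)
    (hrec : ∀ k, 1 ≤ k → ∀ n : ℕ,
      U (k + 3) n = U k (n + 1)
        - 1 / ((U (k + 2) (n + 1) - U (k + 2) n) * (U (k + 1) (n + 1) - U (k + 1) n))) :
    ∀ k, 1 ≤ k → ∀ n : ℕ,
      (U (k + 1) (n + 1) - U (k + 4) n) * (U (k + 3) (n + 1) - U (k + 3) n)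
        - (U k (n + 2) - U (k + 3) (n + 1)) * (U (k + 1) (n + 2) - U (k + 1) (n + 1))
      = 1 / (U (k + 2) (n + 1) - U (k + 2) n)
        - 1 / (U (k + 2) (n + 2) - U (k + 2) (n + 1)) := by
  intro k hk n
  have h1 := hrec k hk n
  have h2 := hrec k hk (n + 1)
  have h3 := hrec (k + 1) (by omega) n
  have hA1 := hden1 k hk n
  have hA2 := hden1 k hk (n + 1)
  have hB1 := hden2 k hk n
  have hB2 := hden2 k hk (n + 1)
  have hC := hden2 (k + 2) (by omega) n
  have e3 : U (k + 4) n = U (k + 1) (n + 1)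
      - 1 / ((U (k + 3) (n + 1) - U (k + 3) n) * (U (k + 2) (n + 1) - U (k + 2) n)) := by
    have : k + 1 + 3 = k + 4 := by ring
    rw [← this]
    simpa using h3
  have hC' : U (k + 3) (n + 1) - U (k + 3) n ≠ 0 := by
    have : k + 2 + 1 = k + 3 := by ring
    rwa [this] at hC
  have d1 : U (k + 1) (n + 1) - U (k + 4) n
      = 1 / ((U (k + 3) (n + 1) - U (k + 3) n) * (U (k + 2) (n + 1) - U (k + 2) n)) := by
    rw [e3]; ring
  have d2 : U k (n + 2) - U (k + 3) (n + 1)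
      = 1 / ((U (k + 2) (n + 2) - U (k + 2) (n + 1)) * (U (k + 1) (n + 2) - U (k + 1) (n + 1))) := by
    rw [h2]; ring
  rw [d1, d2]
  field_simp
end
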